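/- (Corollary 3.1(b).) If (Y(1),Y(0)) is conditionally independent of (R(1),R(0)) given X, then theta_drop = E[tau(X) rho(X)], where tau(x) = E[Y(1) - Y(0) | X = x] and rho(x) = E[R(0)|X=x] E[R(1)|X=x] / E[E[R(0)|X] E[R(1)|X]]. -/

import Mathlib

open MeasureTheory ProbabilityTheory

section aux
variable {Ω : Type*} {m mf : MeasurableSpace Ω} [mΩ : MeasurableSpace Ω]
  {μ : Measure Ω} [IsProbabilityMeasure μ]

lemma condexp_indicator_factor (hm : m ≤ mΩ) (hmf : mf ≤ mΩ)
    {B : Set Ω} (hB : MeasurableSet[mΩ] B)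
    (h : ∀ s : Set Ω, MeasurableSet[mf] s →
      (μ⟦s ∩ B | m⟧) =ᵐ[μ] fun ω => (μ⟦s | m⟧) ω * (μ⟦B | m⟧) ω)
    {f : Ω → ℝ} (hf : Integrable f (μ.trim hmf)) :
    μ[B.indicator f | m] =ᵐ[μ] fun ω => (μ[f | m]) ω * (μ⟦B | m⟧) ω := by
  set cB := (μ⟦B | m⟧) with hcB_def
  have hcB_meas : AEStronglyMeasurable cB μ :=
    (stronglyMeasurable_condExp.mono hm).aestronglyMeasurable
  have hcB_bd : ∀ᵐ ω ∂μ, ‖cB ω‖ ≤ 1 := by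
    have h0 : 0 ≤ᵐ[μ] cB :=
      condExp_nonneg (ae_of_all _ fun ω => Set.indicator_nonneg (fun _ _ => zero_le_one) ω)
    have h1 : cB ≤ᵐ[μ] μ[(fun _ => (1:ℝ)) | m] :=
      condExp_mono ((integrable_const (1:ℝ)).indicator hB) (integrable_const 1)
        (ae_of_all _ fun ω => by
          classical
          by_cases hω : ω ∈ B <;> simp [Set.indicator_apply, hω])
    have h2 : μ[(fun _ => (1:ℝ)) | m] = fun _ => (1:ℝ) := condExp_const hm (1:ℝ)
    rw [h2] at h1
    filter_upwards [h0, h1] with ω h0 h1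
    rw [Real.norm_eq_abs, abs_le]
    have h0' : (0:ℝ) ≤ cB ω := by simpa using h0
    exact ⟨by linarith, h1⟩
  -- integrability of the product `μ[g|m] * cB`
  have hint_mul : ∀ {g : Ω → ℝ}, Integrable g μ →
      Integrable (fun ω => (μ[g | m]) ω * cB ω) μ := by
    intro g hg
    have := Integrable.bdd_mul (c := 1) (integrable_condExp (f := g) (m := m)) hcB_meas hcB_bd
    exact this.congr (ae_of_all _ fun ω => mul_comm _ _)
  -- the predicate
  set P : (Ω → ℝ) → Prop :=
    fun g => μ[B.indicator g | m] =ᵐ[μ] fun ω => (μ[g | m]) ω * cB ω with hP_def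
  -- a quantitative estimate used for the closedness step
  have hdiff : ∀ u v : Ω → ℝ, Integrable u μ → Integrable v μ →
      ∫ ω, |(μ[B.indicator u | m]) ω - (μ[u | m]) ω * cB ω| ∂μ ≤
      (∫ ω, |(μ[B.indicator v | m]) ω - (μ[v | m]) ω * cB ω| ∂μ) + 2 * ∫ ω, |u ω - v ω| ∂μ := by
    intro u v hu hv
    have huv : Integrable (fun ω => u ω - v ω) μ := hu.sub hv
    have hBu : Integrable (B.indicator u) μ := hu.indicator hB
    have hBv : Integrable (B.indicator v) μ := hv.indicator hB
    have hBuv : Integrable (B.indicator fun ω => u ω - v ω) μ := huv.indicator hB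
    have e1 : μ[B.indicator u | m] =ᵐ[μ]
        μ[B.indicator v | m] + μ[B.indicator (fun ω => u ω - v ω) | m] := by
      have : B.indicator u = B.indicator v + B.indicator (fun ω => u ω - v ω) := by
        classical
        funext ω
        by_cases hω : ω ∈ B <;> simp [Set.indicator_apply, hω]
      rw [this]
      exact condExp_add hBv hBuv _
    have e2 : μ[u | m] =ᵐ[μ] μ[v | m] + μ[(fun ω => u ω - v ω) | m] := by
      have : u = v + fun ω => u ω - v ω := by funext ω; simp
      nth_rewrite 1 [this]
      exact condExp_add hv huv _
    have hb1 : ∫ ω, |(μ[B.indicator (fun ω => u ω - v ω) | m]) ω| ∂μ ≤ ∫ ω, |u ω - v ω| ∂μ := by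
      refine (integral_abs_condExp_le _).trans ?_
      refine integral_mono hBuv.abs huv.abs fun ω => ?_
      classical
      by_cases hω : ω ∈ B <;> simp [Set.indicator_apply, hω, abs_nonneg]
    have hb2 : ∫ ω, |(μ[(fun ω => u ω - v ω) | m]) ω * cB ω| ∂μ ≤ ∫ ω, |u ω - v ω| ∂μ := by
      refine le_trans ?_ (integral_abs_condExp_le (m := m) _)
      refine integral_mono_ae (hint_mul huv).abs integrable_condExp.abs ?_
      filter_upwards [hcB_bd] with ω hω
      rw [abs_mul]
      calc |(μ[(fun ω => u ω - v ω) | m]) ω| * |cB ω|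
          ≤ |(μ[(fun ω => u ω - v ω) | m]) ω| * 1 :=
            mul_le_mul_of_nonneg_left (by simpa using hω) (abs_nonneg _)
        _ = _ := mul_one _
    have EA : Integrable (fun ω => |(μ[B.indicator v | m]) ω - (μ[v | m]) ω * cB ω|) μ :=
      (integrable_condExp.sub (hint_mul hv)).abs
    have EB : Integrable (fun ω => |(μ[B.indicator (fun ω => u ω - v ω) | m]) ω|) μ :=
      integrable_condExp.abs
    have EC : Integrable (fun ω => |(μ[(fun ω => u ω - v ω) | m]) ω * cB ω|) μ :=
      (hint_mul huv).abs
    have EBC : Integrable (fun ω => |(μ[B.indicator (fun ω => u ω - v ω) | m]) ω|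
        + |(μ[(fun ω => u ω - v ω) | m]) ω * cB ω|) μ := EB.add EC
    calc ∫ ω, |(μ[B.indicator u | m]) ω - (μ[u | m]) ω * cB ω| ∂μ
        ≤ ∫ ω, (|(μ[B.indicator v | m]) ω - (μ[v | m]) ω * cB ω|
            + (|(μ[B.indicator (fun ω => u ω - v ω) | m]) ω|
            + |(μ[(fun ω => u ω - v ω) | m]) ω * cB ω|)) ∂μ := by
          refine integral_mono_ae (integrable_condExp.sub (hint_mul hu)).abs
            (EA.add EBC) ?_
          filter_upwards [e1, e2] with ω e1 e2
          have : (μ[B.indicator u | m]) ω - (μ[u | m]) ω * cB ω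
              = ((μ[B.indicator v | m]) ω - (μ[v | m]) ω * cB ω)
                + ((μ[B.indicator (fun ω => u ω - v ω) | m]) ω
                  - (μ[(fun ω => u ω - v ω) | m]) ω * cB ω) := by
            rw [e1, e2]; simp [Pi.add_apply]; ring
          rw [this]
          refine (abs_add_le _ _).trans ?_
          gcongr
          exact (abs_sub _ _)
      _ ≤ _ := by
          rw [integral_add EA EBC, integral_add EB EC]
          have := add_le_add hb1 hb2
          linarith
  -- indicator case
  have h_ind : ∀ (c : ℝ) ⦃s : Set Ω⦄, MeasurableSet[mf] s → (μ.trim hmf) s < ⊤ →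
      P (s.indicator fun _ => c) := by
    intro c s hs _
    have hsB : B.indicator (s.indicator fun _ => c)
        = fun ω => c • (s ∩ B).indicator (fun _ => (1:ℝ)) ω := by
      classical
      funext ω
      by_cases h1 : ω ∈ B <;> by_cases h2 : ω ∈ s <;>
        simp [Set.indicator_apply, h1, h2]
    have hsc : (s.indicator fun _ => c) = fun ω => c • s.indicator (fun _ => (1:ℝ)) ω := by
      classical
      funext ω; by_cases h2 : ω ∈ s <;> simp [Set.indicator_apply, h2]
    show μ[B.indicator (s.indicator fun _ => c) | m]
        =ᵐ[μ] fun ω => (μ[(s.indicator fun _ => c) | m]) ω * cB ω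
    rw [hsB, hsc]
    have e1 : μ[(fun ω => c • (s ∩ B).indicator (fun _ => (1:ℝ)) ω) | m]
        =ᵐ[μ] fun ω => c • (μ⟦s ∩ B | m⟧) ω :=
      condExp_smul (μ := μ) (m := m) c ((s ∩ B).indicator (fun _ => (1:ℝ)))
    have e2 : μ[(fun ω => c • s.indicator (fun _ => (1:ℝ)) ω) | m]
        =ᵐ[μ] fun ω => c • (μ⟦s | m⟧) ω :=
      condExp_smul (μ := μ) (m := m) c (s.indicator (fun _ => (1:ℝ)))
    filter_upwards [e1, e2, h s hs] with ω e1 e2 hsω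
    rw [e1, e2, hsω]
    simp only [smul_eq_mul]
    ring
  -- additivity
  have h_add : ∀ ⦃u v : Ω → ℝ⦄, Disjoint (Function.support u) (Function.support v) →
      Integrable u (μ.trim hmf) → Integrable v (μ.trim hmf) → P u → P v → P (u + v) := by
    intro u v _ hu hv hPu hPv
    have hu' := integrable_of_integrable_trim hmf hu
    have hv' := integrable_of_integrable_trim hmf hv
    have hindadd : B.indicator (u + v) = B.indicator u + B.indicator v := by
      classical
      funext ω; by_cases hω : ω ∈ B <;> simp [Set.indicator_apply, hω]
    have e1 : μ[B.indicator (u + v) | m] =ᵐ[μ] μ[B.indicator u | m] + μ[B.indicator v | m] := by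
      rw [hindadd]; exact condExp_add (hu'.indicator hB) (hv'.indicator hB) _
    have e2 : μ[u + v | m] =ᵐ[μ] μ[u | m] + μ[v | m] := condExp_add hu' hv' _
    show μ[B.indicator (u + v) | m] =ᵐ[μ] fun ω => (μ[u + v | m]) ω * cB ω
    filter_upwards [e1, e2, hPu, hPv] with ω e1 e2 p1 p2
    simp only [Pi.add_apply] at e1 e2 p1 p2 ⊢
    rw [e1, e2, p1, p2]; ring
  -- a.e. invariance
  have h_ae : ∀ ⦃u v : Ω → ℝ⦄, u =ᵐ[μ.trim hmf] v → Integrable u (μ.trim hmf) → P u → P v := by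
    intro u v huv _ hPu
    have huv' : u =ᵐ[μ] v := ae_eq_of_ae_eq_trim huv
    have e1 : μ[B.indicator u | m] =ᵐ[μ] μ[B.indicator v | m] := by
      refine condExp_congr_ae ?_
      filter_upwards [huv'] with ω hω
      classical
      by_cases h1 : ω ∈ B <;> simp [Set.indicator_apply, h1, hω]
    have e2 : μ[u | m] =ᵐ[μ] μ[v | m] := condExp_congr_ae huv'
    show μ[B.indicator v | m] =ᵐ[μ] fun ω => (μ[v | m]) ω * cB ω
    filter_upwards [e1, e2, hPu] with ω e1 e2 p
    rw [← e1, p, e2]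
  -- closedness in L¹ of the trimmed measure
  have hintF : ∀ F : (Ω →₁[μ.trim hmf] ℝ), Integrable (F : Ω → ℝ) μ :=
    fun F => integrable_of_integrable_trim hmf (L1.integrable_coeFn F)
  have h_closed : IsClosed {F : Ω →₁[μ.trim hmf] ℝ | P (F : Ω → ℝ)} := by
    set Φ : (Ω →₁[μ.trim hmf] ℝ) → ℝ := fun F =>
      ∫ ω, |(μ[B.indicator (F : Ω → ℝ) | m]) ω - (μ[(F : Ω → ℝ) | m]) ω * cB ω| ∂μ with hΦ
    have hFG : ∀ F G : (Ω →₁[μ.trim hmf] ℝ), ∫ ω, |(F : Ω → ℝ) ω - (G : Ω → ℝ) ω| ∂μ = dist F G := by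
      intro F G
      have h1 : (⇑(F - G) : Ω → ℝ) =ᵐ[μ] fun ω => (F : Ω → ℝ) ω - (G : Ω → ℝ) ω :=
        ae_eq_of_ae_eq_trim (Lp.coeFn_sub F G)
      rw [dist_eq_norm, L1.norm_eq_integral_norm,
        ← integral_trim_ae hmf (Lp.aestronglyMeasurable (F - G)).norm]
      refine (integral_congr_ae ?_).symm
      filter_upwards [h1] with ω hω
      rw [Real.norm_eq_abs, hω]
    have hlip : LipschitzWith 2 Φ := by
      refine LipschitzWith.of_dist_le_mul fun F G => ?_
      rw [Real.dist_eq, abs_sub_le_iff]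
      have hGF : ∫ ω, |(G : Ω → ℝ) ω - (F : Ω → ℝ) ω| ∂μ
          = ∫ ω, |(F : Ω → ℝ) ω - (G : Ω → ℝ) ω| ∂μ := by
        refine integral_congr_ae (ae_of_all _ fun ω => ?_)
        exact abs_sub_comm _ _
      have d1 := hdiff (F : Ω → ℝ) (G : Ω → ℝ) (hintF F) (hintF G)
      have d2 := hdiff (G : Ω → ℝ) (F : Ω → ℝ) (hintF G) (hintF F)
      rw [hFG F G] at d1
      rw [hGF, hFG F G] at d2
      constructor <;> [skip; skip] <;>
        simp only [NNReal.coe_ofNat] <;> linarith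
    have hset : {F : Ω →₁[μ.trim hmf] ℝ | P (F : Ω → ℝ)} = Φ ⁻¹' {0} := by
      ext F
      simp only [Set.mem_setOf_eq, Set.mem_preimage, Set.mem_singleton_iff]
      constructor
      · intro hP
        have h0 : (fun ω => |(μ[B.indicator (F : Ω → ℝ) | m]) ω
            - (μ[(F : Ω → ℝ) | m]) ω * cB ω|) =ᵐ[μ] fun _ => (0:ℝ) := by
          filter_upwards [hP] with ω hω
          rw [hω]; simp
        show (∫ ω, |(μ[B.indicator (F : Ω → ℝ) | m]) ω - (μ[(F : Ω → ℝ) | m]) ω * cB ω| ∂μ) = 0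
        rw [integral_congr_ae h0, integral_const]; simp
      · intro h0
        have hint' : Integrable (fun ω => |(μ[B.indicator (F : Ω → ℝ) | m]) ω
            - (μ[(F : Ω → ℝ) | m]) ω * cB ω|) μ :=
          (integrable_condExp.sub (hint_mul (hintF F))).abs
        have hz := (integral_eq_zero_iff_of_nonneg_ae
          (ae_of_all _ fun ω => abs_nonneg _) hint').mp h0
        show μ[B.indicator (F : Ω → ℝ) | m] =ᵐ[μ] fun ω => (μ[(F : Ω → ℝ) | m]) ω * cB ω
        filter_upwards [hz] with ω hω
        have : |(μ[B.indicator (F : Ω → ℝ) | m]) ω - (μ[(F : Ω → ℝ) | m]) ω * cB ω| = 0 := hω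
        have := abs_eq_zero.mp this
        linarith [sub_eq_zero.mp this]
    rw [hset]
    exact isClosed_singleton.preimage hlip.continuous
  exact @Integrable.induction Ω ℝ mf _ (μ.trim hmf) P h_ind h_add h_closed h_ae f hf

end aux

/-- Corollary 3.1(b): if `(Y(1), Y(0))` is conditionally independent of `(R(1), R(0))` given `X`,
then `θ_drop = E[τ(X) ρ(X)]`, where `τ(x) = E[Y(1) - Y(0) | X = x]` and
`ρ(x) = E[R(0)|X=x] E[R(1)|X=x] / E[E[R(0)|X] E[R(1)|X]]`.
Here `r d`, `yr d` and `τ` are (regular) versions of the conditional expectations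
`E[R(d)|X=·]`, `E[Y(d)R(d)|X=·]` and `E[Y(1)-Y(0)|X=·]`, respectively. -/
theorem corollary_3_1_b
    {Ω : Type*} [MeasurableSpace Ω] [StandardBorelSpace Ω] [Nonempty Ω]
    (μ : Measure Ω) [IsProbabilityMeasure μ]
    {k : ℕ} (Y : Fin 2 → Ω → ℝ) (R : Fin 2 → Ω → ℝ) (X : Ω → Fin k → ℝ)
    (hYmeas : ∀ d, Measurable (Y d)) (hRmeas : ∀ d, Measurable (R d))
    (hXmeas : Measurable X)
    (hR01 : ∀ d ω, R d ω = 0 ∨ R d ω = 1)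
    (hYint : ∀ d, Integrable (Y d) μ)
    (hRpos : ∀ d, 0 < ∫ ω, R d ω ∂μ)
    (hle : MeasurableSpace.comap X inferInstance ≤ ‹MeasurableSpace Ω›)
    (r : Fin 2 → (Fin k → ℝ) → ℝ) (yr : Fin 2 → (Fin k → ℝ) → ℝ)
    (τ : (Fin k → ℝ) → ℝ)
    (hr : ∀ d, μ[R d | MeasurableSpace.comap X inferInstance]
      =ᵐ[μ] fun ω => r d (X ω))
    (hyr : ∀ d, μ[fun ω => Y d ω * R d ω | MeasurableSpace.comap X inferInstance]
      =ᵐ[μ] fun ω => yr d (X ω))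
    (hτ : μ[fun ω => Y 1 ω - Y 0 ω | MeasurableSpace.comap X inferInstance]
      =ᵐ[μ] fun ω => τ (X ω))
    (hdenpos : 0 < ∫ ω, r 1 (X ω) * r 0 (X ω) ∂μ)
    (hCI : CondIndepFun (MeasurableSpace.comap X inferInstance) hle
      (fun ω => (Y 1 ω, Y 0 ω)) (fun ω => (R 1 ω, R 0 ω)) μ) :
    ((∫ ω, yr 1 (X ω) * r 0 (X ω) ∂μ) - ∫ ω, yr 0 (X ω) * r 1 (X ω) ∂μ)
        / (∫ ω, r 1 (X ω) * r 0 (X ω) ∂μ)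
      = ∫ ω, τ (X ω) *
          (r 0 (X ω) * r 1 (X ω) / ∫ ω', r 0 (X ω') * r 1 (X ω') ∂μ) ∂μ := by
  classical
  have hYpair : Measurable (fun ω => (Y 1 ω, Y 0 ω)) := (hYmeas 1).prodMk (hYmeas 0)
  have hRpair : Measurable (fun ω => (R 1 ω, R 0 ω)) := (hRmeas 1).prodMk (hRmeas 0)
  have hCI' := (condIndepFun_iff_condExp_inter_preimage_eq_mul
    (μ := μ) (hm' := hle) hYpair hRpair).mp hCI
  have hmf : MeasurableSpace.comap (fun ω => (Y 1 ω, Y 0 ω)) inferInstance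
      ≤ ‹MeasurableSpace Ω› := hYpair.comap_le
  -- the factorization for each d
  have fact : ∀ (d : Fin 2),
      Measurable[MeasurableSpace.comap (fun ω => (Y 1 ω, Y 0 ω)) inferInstance] (Y d) →
      ∀ t : Set (ℝ × ℝ), MeasurableSet t →
      (∀ ω, ((R 1 ω, R 0 ω) ∈ t ↔ R d ω = 1)) →
      μ[fun ω => Y d ω * R d ω | MeasurableSpace.comap X inferInstance]
        =ᵐ[μ] fun ω => (μ[Y d | MeasurableSpace.comap X inferInstance]) ω
          * (μ[R d | MeasurableSpace.comap X inferInstance]) ω := by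
    intro d hYdm t ht hmem
    have hB : MeasurableSet ((fun ω => (R 1 ω, R 0 ω)) ⁻¹' t) := hRpair ht
    have hindY : ((fun ω => (R 1 ω, R 0 ω)) ⁻¹' t).indicator (Y d)
        = fun ω => Y d ω * R d ω := by
      funext ω
      by_cases hω : ω ∈ (fun ω => (R 1 ω, R 0 ω)) ⁻¹' t
      · have h1 : R d ω = 1 := (hmem ω).mp hω
        simp [Set.indicator_of_mem hω, h1]
      · have h1 : R d ω ≠ 1 := fun hc => hω ((hmem ω).mpr hc)
        rcases hR01 d ω with h0 | h0
        · simp [Set.indicator_of_notMem hω, h0]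
        · exact absurd h0 h1
    have hindR : ((fun ω => (R 1 ω, R 0 ω)) ⁻¹' t).indicator (fun _ => (1:ℝ)) = R d := by
      funext ω
      by_cases hω : ω ∈ (fun ω => (R 1 ω, R 0 ω)) ⁻¹' t
      · have h1 : R d ω = 1 := (hmem ω).mp hω
        simp [Set.indicator_of_mem hω, h1]
      · have h1 : R d ω ≠ 1 := fun hc => hω ((hmem ω).mpr hc)
        rcases hR01 d ω with h0 | h0
        · simp [Set.indicator_of_notMem hω, h0]
        · exact absurd h0 h1
    have hfac := condexp_indicator_factor (μ := μ) hle hmf hB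
      (f := Y d) ?_ ?_
    · rw [hindY] at hfac
      have : μ[((fun ω => (R 1 ω, R 0 ω)) ⁻¹' t).indicator (fun _ => (1:ℝ))
          | MeasurableSpace.comap X inferInstance]
          = μ[R d | MeasurableSpace.comap X inferInstance] := by rw [hindR]
      rw [this] at hfac
      exact hfac
    · rintro s ⟨s', hs', rfl⟩
      exact hCI' s' t hs' ht
    · exact (hYint d).trim hmf hYdm.stronglyMeasurable
  have hY1m : Measurable[MeasurableSpace.comap (fun ω => (Y 1 ω, Y 0 ω)) inferInstance] (Y 1) :=
    measurable_fst.comp (measurable_iff_comap_le.mpr le_rfl)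
  have hY0m : Measurable[MeasurableSpace.comap (fun ω => (Y 1 ω, Y 0 ω)) inferInstance] (Y 0) :=
    measurable_snd.comp (measurable_iff_comap_le.mpr le_rfl)
  have f1 := fact 1 hY1m (Prod.fst ⁻¹' {1})
    ((measurableSet_singleton (1:ℝ)).preimage measurable_fst) (fun ω => Iff.rfl)
  have f0 := fact 0 hY0m (Prod.snd ⁻¹' {1})
    ((measurableSet_singleton (1:ℝ)).preimage measurable_snd) (fun ω => Iff.rfl)
  -- a.e. identities for yr
  have hfac1 : (fun ω => yr 1 (X ω)) =ᵐ[μ]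
      fun ω => (μ[Y 1 | MeasurableSpace.comap X inferInstance]) ω * r 1 (X ω) := by
    filter_upwards [(hyr 1).symm.trans f1, hr 1] with ω h1 h2
    rw [h1, h2]
  have hfac0 : (fun ω => yr 0 (X ω)) =ᵐ[μ]
      fun ω => (μ[Y 0 | MeasurableSpace.comap X inferInstance]) ω * r 0 (X ω) := by
    filter_upwards [(hyr 0).symm.trans f0, hr 0] with ω h1 h2
    rw [h1, h2]
  have hτ' : (fun ω => τ (X ω)) =ᵐ[μ]
      fun ω => (μ[Y 1 | MeasurableSpace.comap X inferInstance]) ω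
        - (μ[Y 0 | MeasurableSpace.comap X inferInstance]) ω := by
    have hsub := condExp_sub (m := MeasurableSpace.comap X inferInstance)
      (hYint 1) (hYint 0)
    filter_upwards [hτ.symm.trans hsub] with ω h
    simpa using h
  -- bounds on r d ∘ X
  have hrbd : ∀ d : Fin 2, ∀ᵐ ω ∂μ, 0 ≤ r d (X ω) ∧ r d (X ω) ≤ 1 := by
    intro d
    have hRint : Integrable (R d) μ := by
      refine (integrable_const (1:ℝ)).mono' (hRmeas d).aestronglyMeasurable ?_
      refine ae_of_all _ fun ω => ?_
      rcases hR01 d ω with h | h <;> simp [h]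
    have h0 : (0:Ω → ℝ) ≤ᵐ[μ] μ[R d | MeasurableSpace.comap X inferInstance] :=
      condExp_nonneg (ae_of_all _ fun ω => by rcases hR01 d ω with h | h <;> simp [h])
    have h1 : μ[R d | MeasurableSpace.comap X inferInstance]
        ≤ᵐ[μ] μ[(fun _ => (1:ℝ)) | MeasurableSpace.comap X inferInstance] :=
      condExp_mono hRint (integrable_const 1)
        (ae_of_all _ fun ω => by rcases hR01 d ω with h | h <;> simp [h])
    rw [condExp_const hle (1:ℝ)] at h1
    filter_upwards [h0, h1, hr d] with ω h0 h1 h2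
    rw [← h2]
    exact ⟨by simpa using h0, h1⟩
  have hrm : ∀ d : Fin 2, AEStronglyMeasurable (fun ω => r d (X ω)) μ := fun d =>
    (stronglyMeasurable_condExp.mono hle).aestronglyMeasurable.congr (hr d)
  -- integrability
  have hint : ∀ d : Fin 2, Integrable (fun ω =>
      (μ[Y d | MeasurableSpace.comap X inferInstance]) ω
        * (r 1 (X ω) * r 0 (X ω))) μ := by
    intro d
    have hb : ∀ᵐ ω ∂μ, ‖r 1 (X ω) * r 0 (X ω)‖ ≤ 1 := by
      filter_upwards [hrbd 1, hrbd 0] with ω h1 h0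
      rw [Real.norm_eq_abs, abs_mul, abs_of_nonneg h1.1, abs_of_nonneg h0.1]
      exact mul_le_one₀ h1.2 h0.1 h0.2
    have := Integrable.bdd_mul (c := 1)
      (integrable_condExp (f := Y d) (m := MeasurableSpace.comap X inferInstance))
      ((hrm 1).mul (hrm 0)) hb
    exact this.congr (ae_of_all _ fun ω => mul_comm _ _)
  -- the three integral identities
  have E1 : ∫ ω, yr 1 (X ω) * r 0 (X ω) ∂μ = ∫ ω,
      (μ[Y 1 | MeasurableSpace.comap X inferInstance]) ω * (r 1 (X ω) * r 0 (X ω)) ∂μ := by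
    refine integral_congr_ae ?_
    filter_upwards [hfac1] with ω h
    rw [h]; ring
  have E0 : ∫ ω, yr 0 (X ω) * r 1 (X ω) ∂μ = ∫ ω,
      (μ[Y 0 | MeasurableSpace.comap X inferInstance]) ω * (r 1 (X ω) * r 0 (X ω)) ∂μ := by
    refine integral_congr_ae ?_
    filter_upwards [hfac0] with ω h
    rw [h]; ring
  have hDD : ∫ ω, r 0 (X ω) * r 1 (X ω) ∂μ = ∫ ω, r 1 (X ω) * r 0 (X ω) ∂μ :=
    integral_congr_ae (ae_of_all _ fun ω => mul_comm _ _)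
  have Eτ : ∫ ω, τ (X ω) * (r 0 (X ω) * r 1 (X ω)
        / ∫ ω', r 0 (X ω') * r 1 (X ω') ∂μ) ∂μ
      = (∫ ω, ((μ[Y 1 | MeasurableSpace.comap X inferInstance]) ω
          - (μ[Y 0 | MeasurableSpace.comap X inferInstance]) ω)
          * (r 1 (X ω) * r 0 (X ω)) ∂μ)
        / ∫ ω, r 1 (X ω) * r 0 (X ω) ∂μ := by
    rw [← integral_div]
    refine integral_congr_ae ?_
    filter_upwards [hτ'] with ω h
    rw [h, hDD]
    ring
  rw [E1, E0, Eτ]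
  congr 1
  rw [← integral_sub (hint 1) (hint 0)]
  refine integral_congr_ae (ae_of_all _ fun ω => ?_)
  ring
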